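/- Softmax temperature monotonicity of norm: for a vector x ∈ R^C and temperatures 0 < τ ≤ τ', the Euclidean norm of the softmax at temperature τ is at least that at temperature τ'; i.e., decreasing the temperature sharpens the distribution, increasing ‖P(x,τ)‖. -/

import Mathlib

open scoped BigOperators

noncomputable def softmax9 {C : ℕ} (τ : ℝ) (x : EuclideanSpace ℝ (Fin C)) :
    EuclideanSpace ℝ (Fin C) :=
  WithLp.toLp 2 (fun i => Real.exp (x i / τ) / ∑ j, Real.exp (x j / τ))

private lemma cheb_aux {n : ℕ} (b c : Fin n → ℝ) (hb : ∀ i, 0 < b i)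
    (hmono : ∀ i j, 0 ≤ (b i - b j) * (c i - c j)) :
    (∑ i, b i ^ 2) * (∑ i, b i * c i) ≤ (∑ i, b i ^ 2 * c i) * (∑ i, b i) := by
  have hnn : 0 ≤ ∑ i : Fin n, ∑ j : Fin n, b i * b j * ((b i - b j) * (c i - c j)) :=
    Finset.sum_nonneg fun i _ => Finset.sum_nonneg fun j _ =>
      mul_nonneg (mul_nonneg (hb i).le (hb j).le) (hmono i j)
  have identity : (∑ i : Fin n, ∑ j : Fin n, b i * b j * ((b i - b j) * (c i - c j)))
      = (∑ i, b i ^ 2 * c i) * (∑ i, b i) + (∑ i, b i) * (∑ i, b i ^ 2 * c i)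
        - (∑ i, b i ^ 2) * (∑ i, b i * c i) - (∑ i, b i * c i) * (∑ i, b i ^ 2) := by
    rw [Finset.sum_mul_sum, Finset.sum_mul_sum, Finset.sum_mul_sum, Finset.sum_mul_sum,
      ← Finset.sum_add_distrib, ← Finset.sum_sub_distrib, ← Finset.sum_sub_distrib]
    refine Finset.sum_congr rfl fun i _ => ?_
    rw [← Finset.sum_add_distrib, ← Finset.sum_sub_distrib, ← Finset.sum_sub_distrib]
    exact Finset.sum_congr rfl fun j _ => by ring
  have e1 : (∑ i, b i) * (∑ i, b i ^ 2 * c i) = (∑ i, b i ^ 2 * c i) * (∑ i, b i) :=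
    mul_comm _ _
  have e2 : (∑ i, b i * c i) * (∑ i, b i ^ 2) = (∑ i, b i ^ 2) * (∑ i, b i * c i) :=
    mul_comm _ _
  linarith [identity, hnn]

private lemma key_aux {n : ℕ} (hn : 0 < n) (b c : Fin n → ℝ) (hb : ∀ i, 0 < b i)
    (hc : ∀ i, 0 < c i)
    (hmono : ∀ i j, 0 ≤ (b i - b j) * (c i - c j)) :
    (∑ i, b i ^ 2) / (∑ i, b i) ^ 2 ≤ (∑ i, (b i * c i) ^ 2) / (∑ i, b i * c i) ^ 2 := by
  have hne : (Finset.univ : Finset (Fin n)).Nonempty := ⟨⟨0, hn⟩, Finset.mem_univ _⟩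
  have hT4 : 0 < ∑ i, b i := Finset.sum_pos (fun i _ => hb i) hne
  have hT2 : 0 < ∑ i, b i * c i := Finset.sum_pos (fun i _ => mul_pos (hb i) (hc i)) hne
  have hT1 : 0 < ∑ i, b i ^ 2 := Finset.sum_pos (fun i _ => pow_pos (hb i) 2) hne
  have hT5 : 0 < ∑ i, (b i * c i) ^ 2 :=
    Finset.sum_pos (fun i _ => pow_pos (mul_pos (hb i) (hc i)) 2) hne
  have hT3 : 0 < ∑ i, b i ^ 2 * c i :=
    Finset.sum_pos (fun i _ => mul_pos (pow_pos (hb i) 2) (hc i)) hne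
  have h1 := cheb_aux b c hb hmono
  have h2 : (∑ i, b i * (b i * c i)) ^ 2 ≤ (∑ i, b i ^ 2) * (∑ i, (b i * c i) ^ 2) :=
    Finset.sum_mul_sq_le_sq_mul_sq _ _ _
  have h3 : (∑ i, b i * (b i * c i)) = ∑ i, b i ^ 2 * c i :=
    Finset.sum_congr rfl fun i _ => by ring
  rw [h3] at h2
  rw [div_le_div_iff₀ (by positivity) (by positivity)]
  -- (∑ b²) * (∑ bc)² ≤ (∑ (bc)²) * (∑ b)²
  have hA := mul_self_le_mul_self (mul_nonneg hT1.le hT2.le) h1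
  have hB := mul_le_mul_of_nonneg_right h2 (sq_nonneg (∑ i, b i))
  nlinarith [hA, hB, hT1, hT2, hT4, hT5]

theorem stmt_9 {C : ℕ} (x : EuclideanSpace ℝ (Fin C)) (τ τ' : ℝ)
    (hτ : 0 < τ) (hττ' : τ ≤ τ') :
    ‖softmax9 τ' x‖ ≤ ‖softmax9 τ x‖ := by
  rcases Nat.eq_zero_or_pos C with hC | hC
  · subst hC
    simp [EuclideanSpace.norm_eq]
  · have hτ' : 0 < τ' := hτ.trans_le hττ'
    set b : Fin C → ℝ := fun i => Real.exp (x i / τ') with hbdef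
    set c : Fin C → ℝ := fun i => Real.exp (x i * (τ⁻¹ - τ'⁻¹)) with hcdef
    have hb : ∀ i, 0 < b i := fun i => Real.exp_pos _
    have hc : ∀ i, 0 < c i := fun i => Real.exp_pos _
    have hu : (0:ℝ) ≤ τ⁻¹ - τ'⁻¹ := by
      have := inv_anti₀ hτ hττ'
      linarith
    have hbc : ∀ i, Real.exp (x i / τ) = b i * c i := by
      intro i
      rw [hbdef, hcdef, ← Real.exp_add]
      congr 1
      field_simp
      ring
    have hmono : ∀ i j, 0 ≤ (b i - b j) * (c i - c j) := by
      intro i j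
      rcases le_total (x i) (x j) with h | h
      · have h1 : b i ≤ b j := Real.exp_le_exp.2 ((div_le_div_iff_of_pos_right hτ').2 h)
        have h2 : c i ≤ c j := Real.exp_le_exp.2 (mul_le_mul_of_nonneg_right h hu)
        nlinarith
      · have h1 : b j ≤ b i := Real.exp_le_exp.2 ((div_le_div_iff_of_pos_right hτ').2 h)
        have h2 : c j ≤ c i := Real.exp_le_exp.2 (mul_le_mul_of_nonneg_right h hu)
        exact mul_nonneg (by linarith) (by linarith)
    have key := key_aux hC b c hb hc hmono
    have hnorm : ∀ σ : ℝ, ‖softmax9 σ x‖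
        = Real.sqrt ((∑ i, Real.exp (x i / σ) ^ 2) / (∑ j, Real.exp (x j / σ)) ^ 2) := by
      intro σ
      rw [EuclideanSpace.norm_eq]
      congr 1
      simp_rw [softmax9, Real.norm_eq_abs, sq_abs, div_pow, ← Finset.sum_div]
    rw [hnorm, hnorm]
    apply Real.sqrt_le_sqrt
    calc (∑ i, Real.exp (x i / τ') ^ 2) / (∑ j, Real.exp (x j / τ')) ^ 2
        = (∑ i, b i ^ 2) / (∑ i, b i) ^ 2 := rfl
      _ ≤ (∑ i, (b i * c i) ^ 2) / (∑ i, b i * c i) ^ 2 := key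
      _ = (∑ i, Real.exp (x i / τ) ^ 2) / (∑ j, Real.exp (x j / τ)) ^ 2 := by
          simp_rw [hbc]
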